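/- Let F be a symmetric positive definite q×q real matrix, Π a q×q permutation matrix, 1 ≤ k ≤ q, Q_1 the upper-left k×k block of Π F Π^T, and H the q×q matrix whose upper-left k×k block is Q_1^{−1} and whose other entries are 0. Then P = F^{1/2} Π^T [(Π F Π^T)^{−1} − H] Π F^{1/2} is a symmetric idempotent matrix (an orthogonal projection) with trace(P) = rank(P) = q − k. -/

import Mathlib

open Matrix
open scoped BigOperators Classical

noncomputable section

namespace ProjLemma

/-- pad the upper-left `k × k` block of `A` with the identity outside the block -/
def blockPad {q : ℕ} (k : ℕ) (A : Matrix (Fin q) (Fin q) ℝ) : Matrix (Fin q) (Fin q) ℝ :=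
  Matrix.of fun i j => if (i : ℕ) < k ∧ (j : ℕ) < k then A i j else if i = j then 1 else 0

/-- the `q × q` matrix whose upper-left `k × k` block is the inverse `Q₁⁻¹` of the
upper-left `k × k` block `Q₁` of `A` and whose other entries are `0` -/
def blockInvPad {q : ℕ} (k : ℕ) (A : Matrix (Fin q) (Fin q) ℝ) : Matrix (Fin q) (Fin q) ℝ :=
  Matrix.of fun i j => if (i : ℕ) < k ∧ (j : ℕ) < k then (blockPad k A)⁻¹ i j else 0

/-- the square root of a positive semidefinite matrix, as `Matrix.PosSemidef.sqrt` was
defined in the older Mathlib -/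
def posSemidefSqrt {n : Type*} [Fintype n] [DecidableEq n] {A : Matrix n n ℝ}
    (hA : A.PosSemidef) : Matrix n n ℝ :=
  hA.1.eigenvectorUnitary.1 * diagonal ((↑) ∘ (√·) ∘ hA.1.eigenvalues) *
    (star hA.1.eigenvectorUnitary : Matrix n n ℝ)

lemma perm_mul_transpose {q : ℕ} (σ : Equiv.Perm (Fin q)) :
    (Matrix.of fun i j => if σ j = i then (1 : ℝ) else 0) *
      (Matrix.of fun i j => if σ j = i then (1 : ℝ) else 0)ᵀ = 1 := by
  ext i j
  simp only [mul_apply, transpose_apply, of_apply, one_apply,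
    Equiv.apply_eq_iff_eq_symm_apply, ite_mul, one_mul, zero_mul]
  rw [Finset.sum_ite_eq' Finset.univ (σ.symm i)]
  simp [Equiv.symm_apply_eq, eq_comm]

lemma perm_transpose_mul {q : ℕ} (σ : Equiv.Perm (Fin q)) :
    (Matrix.of fun i j => if σ j = i then (1 : ℝ) else 0)ᵀ *
      (Matrix.of fun i j => if σ j = i then (1 : ℝ) else 0) = 1 := by
  ext i j
  simp only [mul_apply, transpose_apply, of_apply, one_apply, ite_mul, one_mul, zero_mul,
    eq_comm (a := _)]
  rw [Finset.sum_ite_eq' Finset.univ (σ i)]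
  simp [eq_comm]

lemma posDef_conj {q : ℕ} {F P : Matrix (Fin q) (Fin q) ℝ} (hF : F.PosDef)
    (h1 : P * Pᵀ = 1) : (P * F * Pᵀ).PosDef := by
  have hFt : Fᵀ = F := hF.isHermitian
  refine Matrix.PosDef.of_dotProduct_mulVec_pos ?_ ?_
  · have hFh : Fᴴ = F := hF.isHermitian
    simp [Matrix.IsHermitian, conjTranspose_mul, hFh, hFt, Matrix.mul_assoc]
  · intro x hx
    have hy : Pᵀ *ᵥ x ≠ 0 := by
      intro h
      apply hx
      have := congrArg (P *ᵥ ·) h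
      simpa [mulVec_mulVec, h1] using this
    have := hF.dotProduct_mulVec_pos hy
    have hrw : star x ⬝ᵥ ((P * F * Pᵀ) *ᵥ x) = star (Pᵀ *ᵥ x) ⬝ᵥ (F *ᵥ (Pᵀ *ᵥ x)) := by
      rw [← mulVec_mulVec, ← mulVec_mulVec]
      rw [dotProduct_mulVec (star x) P]
      congr 1
      show (star x) ᵥ* P = star (Pᵀ *ᵥ x)
      rw [mulVec_transpose]
      show (star x) ᵥ* P = x ᵥ* P
      rfl
    rw [hrw]; exact this

lemma blockPad_posDef {q k : ℕ} {G : Matrix (Fin q) (Fin q) ℝ} (hG : G.PosDef) :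
    (blockPad k G).PosDef := by
  have hGt : Gᵀ = G := hG.isHermitian
  have hsym : ∀ i j, G j i = G i j := fun i j => congrFun (congrFun hGt i) j
  refine Matrix.PosDef.of_dotProduct_mulVec_pos ?_ ?_
  · show (blockPad k G)ᴴ = _
    ext i j
    simp only [conjTranspose_apply, blockPad, of_apply, star_trivial]
    by_cases h1 : (i:ℕ) < k <;> by_cases h2 : (j:ℕ) < k
    · simp [h1, h2, hsym]
    · simp [h1, h2, eq_comm]
    · simp [h1, h2, eq_comm]
    · simp [h1, h2, eq_comm]
  · intro x hx
    have key : star x ⬝ᵥ (blockPad k G *ᵥ x)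
        = star (fun i : Fin q => if (i:ℕ) < k then x i else 0) ⬝ᵥ
            (G *ᵥ (fun i : Fin q => if (i:ℕ) < k then x i else 0))
          + ∑ i ∈ Finset.univ.filter (fun i : Fin q => ¬ (i:ℕ) < k), x i * x i := by
      simp only [dotProduct, mulVec, star_trivial, blockPad, of_apply, dotProduct]
      rw [Finset.sum_filter, ← Finset.sum_add_distrib]
      refine Finset.sum_congr rfl fun i _ => ?_
      by_cases h1 : (i:ℕ) < k
      · simp only [h1, if_true, true_and, not_true_eq_false, if_false, add_zero]
        show x i * _ = x i * _
        refine congrArg (x i * ·) ?_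
        refine Finset.sum_congr rfl fun j _ => ?_
        by_cases h2 : (j:ℕ) < k
        · simp [h2]
        · simp only [h2, if_false, and_false, mul_zero]
          have : i ≠ j := fun h => h2 (h ▸ h1)
          simp [this]
      · simp only [h1, if_false, false_and, not_false_iff, if_true, zero_mul]
        simp [ite_mul, Finset.sum_ite_eq]
    rw [key]
    set y : Fin q → ℝ := fun i : Fin q => if (i:ℕ) < k then x i else 0 with hy
    by_cases hy0 : y = 0
    · have hxy : ∃ i : Fin q, ¬ (i:ℕ) < k ∧ x i ≠ 0 := by
        by_contra hc
        push_neg at hc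
        apply hx
        funext i
        by_cases h1 : (i:ℕ) < k
        · have := congrFun hy0 i
          simpa [hy, h1] using this
        · exact hc i (not_lt.mp h1)
      obtain ⟨i0, hik, hxi⟩ := hxy
      have hpos : 0 < ∑ i ∈ Finset.univ.filter (fun i : Fin q => ¬ (i:ℕ) < k), x i * x i := by
        apply Finset.sum_pos' (fun j _ => mul_self_nonneg _)
        exact ⟨i0, by simpa using hik, by simpa using mul_self_pos.mpr hxi⟩
      have h2 : star y ⬝ᵥ (G *ᵥ y) = 0 := by simp [hy0]
      rw [h2, zero_add]; exact hpos
    · have h1 : 0 < star y ⬝ᵥ (G *ᵥ y) := hG.dotProduct_mulVec_pos hy0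
      have h2 : 0 ≤ ∑ i ∈ Finset.univ.filter (fun i : Fin q => ¬ (i:ℕ) < k), x i * x i :=
        Finset.sum_nonneg fun j _ => mul_self_nonneg _
      linarith

lemma traceE {q k : ℕ} (hkq : k ≤ q) :
    (Matrix.diagonal (fun i : Fin q => if (i:ℕ) < k then (1:ℝ) else 0)).trace = (k : ℝ) := by
  rw [Matrix.trace_diagonal, Finset.sum_boole]
  norm_num
  rw [show (Finset.univ.filter fun x : Fin q => (x:ℕ) < k)
      = Finset.univ.map (Fin.castLEEmb hkq) from ?_]
  · rw [Finset.card_map, Finset.card_univ, Fintype.card_fin]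
  · ext a
    simp only [Finset.mem_filter, Finset.mem_univ, true_and, Finset.mem_map,
      Fin.castLEEmb_apply]
    constructor
    · intro ha
      exact ⟨⟨a.val, ha⟩, rfl⟩
    · rintro ⟨y, rfl⟩
      exact y.isLt

set_option maxHeartbeats 2000000 in
theorem projection_trace_rank (q k : ℕ) (hk1 : 1 ≤ k) (hkq : k ≤ q)
    (F : Matrix (Fin q) (Fin q) ℝ) (hF : F.PosDef) (hFsymm : Fᵀ = F)
    (Pm : Matrix (Fin q) (Fin q) ℝ)
    (hPm : ∃ σ : Equiv.Perm (Fin q),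
      Pm = Matrix.of fun i j => if σ j = i then (1 : ℝ) else 0) :
    ((posSemidefSqrt hF.posSemidef) * Pmᵀ *
        ((Pm * F * Pmᵀ)⁻¹ - blockInvPad k (Pm * F * Pmᵀ)) * Pm * (posSemidefSqrt hF.posSemidef))ᵀ
      = (posSemidefSqrt hF.posSemidef) * Pmᵀ *
          ((Pm * F * Pmᵀ)⁻¹ - blockInvPad k (Pm * F * Pmᵀ)) * Pm * (posSemidefSqrt hF.posSemidef) ∧
    ((posSemidefSqrt hF.posSemidef) * Pmᵀ *
        ((Pm * F * Pmᵀ)⁻¹ - blockInvPad k (Pm * F * Pmᵀ)) * Pm * (posSemidefSqrt hF.posSemidef)) *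
      ((posSemidefSqrt hF.posSemidef) * Pmᵀ *
        ((Pm * F * Pmᵀ)⁻¹ - blockInvPad k (Pm * F * Pmᵀ)) * Pm * (posSemidefSqrt hF.posSemidef))
      = (posSemidefSqrt hF.posSemidef) * Pmᵀ *
          ((Pm * F * Pmᵀ)⁻¹ - blockInvPad k (Pm * F * Pmᵀ)) * Pm * (posSemidefSqrt hF.posSemidef) ∧
    ((posSemidefSqrt hF.posSemidef) * Pmᵀ *
        ((Pm * F * Pmᵀ)⁻¹ - blockInvPad k (Pm * F * Pmᵀ)) * Pm * (posSemidefSqrt hF.posSemidef)).trace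
      = ((q - k : ℕ) : ℝ) ∧
    ((posSemidefSqrt hF.posSemidef) * Pmᵀ *
        ((Pm * F * Pmᵀ)⁻¹ - blockInvPad k (Pm * F * Pmᵀ)) * Pm * (posSemidefSqrt hF.posSemidef)).rank
      = q - k := by
  obtain ⟨σ, hσ⟩ := hPm
  have hPP : Pm * Pmᵀ = 1 := by rw [hσ]; exact perm_mul_transpose σ
  have hPtP : Pmᵀ * Pm = 1 := by rw [hσ]; exact perm_transpose_mul σ
  clear hσ
  set S := (posSemidefSqrt hF.posSemidef) with hSdef
  set G := Pm * F * Pmᵀ with hGdef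
  set B := blockPad k G with hBdef
  set N := B⁻¹ with hNdef
  set E := Matrix.diagonal (fun i : Fin q => if (i:ℕ) < k then (1:ℝ) else 0) with hEdef
  set D := Matrix.diagonal (fun i : Fin q => if (i:ℕ) < k then (1:ℝ) else -1) with hDdef
  set H := blockInvPad k G with hHdef0
  set M := G⁻¹ - H with hMdef
  -- basic facts
  have hSS : S * S = F := by
    have hU : (star hF.posSemidef.1.eigenvectorUnitary : Matrix (Fin q) (Fin q) ℝ) *
        (hF.posSemidef.1.eigenvectorUnitary : Matrix (Fin q) (Fin q) ℝ) = 1 :=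
      Unitary.coe_star_mul_self _
    conv_rhs => rw [hF.posSemidef.1.spectral_theorem, Unitary.conjStarAlgAut_apply]
    rw [hSdef, posSemidefSqrt]
    simp only [Matrix.mul_assoc]
    rw [← Matrix.mul_assoc _ (hF.posSemidef.1.eigenvectorUnitary : Matrix (Fin q) (Fin q) ℝ), hU,
      Matrix.one_mul, ← Matrix.mul_assoc (diagonal _) (diagonal _), diagonal_mul_diagonal]
    congr 3
    funext i
    simp [Real.mul_self_sqrt (hF.posSemidef.eigenvalues_nonneg i)]
  have hSt : Sᵀ = S := by
    rw [hSdef, posSemidefSqrt]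
    simp [Matrix.mul_assoc, ← Matrix.conjTranspose_eq_transpose_of_trivial,
      Matrix.star_eq_conjTranspose, Matrix.conjTranspose_mul]
  have hG : G.PosDef := posDef_conj hF hPP
  have hGt : Gᵀ = G := hG.isHermitian
  have hB : B.PosDef := blockPad_posDef hG
  have hBt : Bᵀ = B := hB.isHermitian
  have hBdet : IsUnit B.det := hB.det_pos.ne'.isUnit
  have hNB : N * B = 1 := Matrix.nonsing_inv_mul B hBdet
  have hBN : B * N = 1 := Matrix.mul_nonsing_inv B hBdet
  have hGdet : IsUnit G.det := hG.det_pos.ne'.isUnit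
  have hGiG : G⁻¹ * G = 1 := Matrix.nonsing_inv_mul G hGdet
  have hGGi : G * G⁻¹ = 1 := Matrix.mul_nonsing_inv G hGdet
  have hE2 : E * E = E := by
    rw [hEdef, diagonal_mul_diagonal]
    refine congrArg Matrix.diagonal ?_
    funext i
    by_cases h : (i:ℕ) < k <;> simp [h]
  have hEt : Eᵀ = E := by rw [hEdef, diagonal_transpose]
  have hDD : D * D = 1 := by
    rw [hDdef, diagonal_mul_diagonal,
      show (fun i : Fin q => (if (i:ℕ) < k then (1:ℝ) else -1) * (if (i:ℕ) < k then (1:ℝ) else -1))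
        = fun _ : Fin q => (1:ℝ) from funext fun i => by by_cases h : (i:ℕ) < k <;> simp [h]]
    exact Matrix.diagonal_one
  have hDBD : D * B * D = B := by
    ext i j
    simp only [hDdef, hBdef, Matrix.diagonal_mul, Matrix.mul_diagonal, blockPad, of_apply]
    by_cases h1 : (i:ℕ) < k <;> by_cases h2 : (j:ℕ) < k
    · simp [h1, h2]
    · have hij : i ≠ j := fun h => h2 (h ▸ h1)
      simp [h1, h2, hij]
    · have hij : i ≠ j := fun h => h1 (h ▸ h2)
      simp [h1, h2, hij]
    · by_cases hij : i = j <;> simp [h1, h2, hij]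
  have hDinv : D⁻¹ = D := Matrix.inv_eq_right_inv hDD
  have hDN : D * N * D = N := by
    conv_lhs => rw [hNdef, ← hDBD]
    rw [Matrix.mul_inv_rev, Matrix.mul_inv_rev, hDinv, ← hNdef]
    rw [← Matrix.mul_assoc D D, hDD, Matrix.one_mul, Matrix.mul_assoc, hDD, Matrix.mul_one]
  have hmix : ∀ i j : Fin q, ¬ ((i:ℕ) < k ↔ (j:ℕ) < k) → N i j = 0 := by
    intro i j hij
    have h := congrFun (congrFun hDN i) j
    simp only [hDdef, Matrix.diagonal_mul, Matrix.mul_diagonal] at h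
    by_cases h1 : (i:ℕ) < k <;> by_cases h2 : (j:ℕ) < k <;>
      simp only [h1, h2, if_true, if_false] at h hij ⊢ <;> first
        | (exfalso; tauto)
        | linarith
  have hEN : E * N = N * E := by
    ext i j
    simp only [hEdef, Matrix.diagonal_mul, Matrix.mul_diagonal]
    by_cases h1 : (i:ℕ) < k <;> by_cases h2 : (j:ℕ) < k
    · simp [h1, h2]
    · rw [hmix i j (by simp [h1, h2])]; simp
    · rw [hmix i j (by simp [h1, h2])]; simp
    · simp [h1, h2]
  have hENE : E * N * E = E * N := by
    rw [Matrix.mul_assoc, ← hEN, ← Matrix.mul_assoc, hE2]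
  have hH : H = E * N * E := by
    ext i j
    simp only [hHdef0, blockInvPad, of_apply, hEdef, Matrix.diagonal_mul, Matrix.mul_diagonal,
      ← hNdef, ← hBdef]
    by_cases h1 : (i:ℕ) < k <;> by_cases h2 : (j:ℕ) < k <;> simp [h1, h2]
  have hH2 : H = E * N := by rw [hH, hENE]
  have hH3 : H = N * E := by rw [hH2, hEN]
  have hEGE : E * G * E = B - 1 + E := by
    ext i j
    simp only [hEdef, Matrix.diagonal_mul, Matrix.mul_diagonal, hBdef, blockPad,
      Matrix.add_apply, Matrix.sub_apply, Matrix.one_apply, of_apply, Matrix.diagonal_apply]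
    by_cases h1 : (i:ℕ) < k <;> by_cases h2 : (j:ℕ) < k
    · by_cases hij : i = j <;> simp [h1, h2, hij]
    · have hij : i ≠ j := fun h => h2 (h ▸ h1)
      simp [h1, h2, hij]
    · have hij : i ≠ j := fun h => h1 (h ▸ h2)
      simp [h1, h2, hij]
    · by_cases hij : i = j <;> simp [h1, h2, hij]
  have hBeq : B = E * G * E + 1 - E := by rw [hEGE]; abel
  have hB1E : B * (1 - E) = 1 - E := by
    calc B * (1 - E) = (E * G * E + 1 - E) * (1 - E) := by rw [← hBeq]
    _ = E * G * E - E * G * (E * E) + (1 - E) - (E - E * E) := by noncomm_ring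
    _ = 1 - E := by rw [hE2]; noncomm_ring
  have h1EB : (1 - E) * B = 1 - E := by
    calc (1 - E) * B = (1 - E) * (E * G * E + 1 - E) := by rw [← hBeq]
    _ = E * G * E - (E * E) * G * E + (1 - E) - (E - E * E) := by noncomm_ring
    _ = 1 - E := by rw [hE2]; noncomm_ring
  have hN1E : N * (1 - E) = 1 - E := by
    conv_lhs => rw [← hB1E]
    rw [← Matrix.mul_assoc, hNB, Matrix.one_mul]
  have h1EN : (1 - E) * N = 1 - E := by
    conv_lhs => rw [← h1EB]
    rw [Matrix.mul_assoc, hBN, Matrix.mul_one]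
  have c1' : N - E * N = 1 - E := by
    have := h1EN
    rwa [Matrix.sub_mul, Matrix.one_mul] at this
  have c2' : N * N - E * (N * N) = 1 - E := by
    have h : (1 - E) * (N * N) = 1 - E := by rw [← Matrix.mul_assoc, h1EN, h1EN]
    rwa [Matrix.sub_mul, Matrix.one_mul] at h
  have hHGH : H * G * H = H := by
    calc H * G * H = (N * E) * G * (E * N) := by rw [hH3]; rw [hEN]
    _ = N * (E * G * E) * N := by noncomm_ring
    _ = N * (B - 1 + E) * N := by rw [hEGE]
    _ = N * B * N - N * N + N * (E * N) := by noncomm_ring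
    _ = N - N * N + E * (N * N) := by
        rw [hNB, Matrix.one_mul, ← Matrix.mul_assoc N E N, ← hEN, Matrix.mul_assoc E N N]
    _ = (N - E * N) - (N * N - E * (N * N)) + E * N := by abel
    _ = (1 - E) - (1 - E) + E * N := by rw [c1', c2']
    _ = E * N := by abel
    _ = H := hH2.symm
  have hMGM : M * G * M = M := by
    have hMG : M * G = 1 - H * G := by rw [hMdef, Matrix.sub_mul, hGiG]
    calc M * G * M = (1 - H * G) * M := by rw [Matrix.mul_assoc, ← hMG]; noncomm_ring
    _ = M - H * (G * M) := by noncomm_ring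
    _ = M - H * (G * G⁻¹ - G * H) := by rw [hMdef, Matrix.mul_sub]
    _ = M - H * (1 - G * H) := by rw [hGGi]
    _ = M - (H - H * G * H) := by noncomm_ring
    _ = M - (H - H) := by rw [hHGH]
    _ = M := by simp
  have hNt : Nᵀ = N := by rw [hNdef, Matrix.transpose_nonsing_inv, hBt]
  have hHt : Hᵀ = H := by
    rw [hH, Matrix.transpose_mul, Matrix.transpose_mul, hEt, hNt]
    exact (Matrix.mul_assoc E N E).symm
  have hMt : Mᵀ = M := by
    have hGit : (G⁻¹)ᵀ = G⁻¹ := by rw [Matrix.transpose_nonsing_inv, hGt]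
    rw [hMdef, Matrix.transpose_sub, hGit, hHt]
  have hCA : (Pm * S) * (S * Pmᵀ) = G := by
    rw [Matrix.mul_assoc Pm S, ← Matrix.mul_assoc S S, hSS, ← Matrix.mul_assoc]
  -- the four statements
  have goal1 : (S * Pmᵀ * M * Pm * S)ᵀ = S * Pmᵀ * M * Pm * S := by
    simp only [Matrix.transpose_mul, Matrix.transpose_transpose, hSt, hMt, Matrix.mul_assoc]
  have goal2 : (S * Pmᵀ * M * Pm * S) * (S * Pmᵀ * M * Pm * S) = S * Pmᵀ * M * Pm * S := by
    calc (S * Pmᵀ * M * Pm * S) * (S * Pmᵀ * M * Pm * S)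
        = (S * Pmᵀ) * M * ((Pm * S) * (S * Pmᵀ)) * M * (Pm * S) := by noncomm_ring
    _ = (S * Pmᵀ) * (M * G * M) * (Pm * S) := by rw [hCA]; noncomm_ring
    _ = (S * Pmᵀ) * M * (Pm * S) := by rw [hMGM]
    _ = S * Pmᵀ * M * Pm * S := by noncomm_ring
  have hENtr : E * N - N = E - 1 := by
    calc E * N - N = -(N - E * N) := by abel
    _ = -(1 - E) := by rw [c1']
    _ = E - 1 := by abel
  have htrGH : (G * H).trace = (k : ℝ) := by
    calc (G * H).trace = ((G * (E * N)) * E).trace := by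
          rw [hH]; congr 1; noncomm_ring
    _ = (E * (G * (E * N))).trace := by rw [Matrix.trace_mul_comm]
    _ = ((E * G * E) * N).trace := by congr 1; noncomm_ring
    _ = ((B - 1 + E) * N).trace := by rw [hEGE]
    _ = (B * N).trace - (1 * N).trace + (E * N).trace := by
          rw [Matrix.add_mul, Matrix.sub_mul, Matrix.trace_add, Matrix.trace_sub]
    _ = (1 : Matrix (Fin q) (Fin q) ℝ).trace + (E * N - N).trace := by
          rw [hBN, Matrix.one_mul, Matrix.trace_sub]; ring
    _ = (1 : Matrix (Fin q) (Fin q) ℝ).trace + (E - 1).trace := by rw [hENtr]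
    _ = (q : ℝ) + ((k : ℝ) - (q : ℝ)) := by
          rw [Matrix.trace_sub, hEdef, traceE hkq, Matrix.trace_one]
          simp [Fintype.card_fin]
    _ = (k : ℝ) := by ring
  have goal3 : (S * Pmᵀ * M * Pm * S).trace = ((q - k : ℕ) : ℝ) := by
    have htr1 : (S * Pmᵀ * M * Pm * S).trace = (G * M).trace := by
      rw [show S * Pmᵀ * M * Pm * S = (S * Pmᵀ * M) * (Pm * S) from by noncomm_ring,
        Matrix.trace_mul_comm]
      congr 1
      calc (Pm * S) * (S * Pmᵀ * M) = ((Pm * S) * (S * Pmᵀ)) * M := by noncomm_ring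
      _ = G * M := by rw [hCA]
    rw [htr1, hMdef, Matrix.mul_sub, Matrix.trace_sub, hGGi, Matrix.trace_one, htrGH,
      Nat.cast_sub hkq]
    simp [Fintype.card_fin]
  have goal4 : (S * Pmᵀ * M * Pm * S).rank = q - k := by
    set P := S * Pmᵀ * M * Pm * S with hPdef
    have hf : P.mulVecLin ∘ₗ P.mulVecLin = P.mulVecLin := by
      rw [← Matrix.mulVecLin_mul, goal2]
    have hproj : LinearMap.IsProj (LinearMap.range P.mulVecLin) P.mulVecLin := by
      constructor
      · intro x
        exact LinearMap.mem_range_self _ x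
      · rintro x ⟨y, rfl⟩
        exact LinearMap.ext_iff.mp hf y
    have htrace := hproj.trace
    have htm : LinearMap.trace ℝ (Fin q → ℝ) P.mulVecLin = P.trace := by
      rw [LinearMap.trace_eq_matrix_trace ℝ (Pi.basisFun ℝ (Fin q)),
        LinearMap.toMatrix_eq_toMatrix', ← Matrix.toLin'_apply', LinearMap.toMatrix'_toLin']
    have hfr : ((Module.finrank ℝ (LinearMap.range P.mulVecLin)) : ℝ) = ((q - k : ℕ) : ℝ) := by
      rw [← htrace, htm, goal3]
    have hfr' : Module.finrank ℝ (LinearMap.range P.mulVecLin) = q - k :=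
      Nat.cast_injective hfr
    exact hfr'
  exact ⟨goal1, goal2, goal3, goal4⟩

end ProjLemma
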